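/- Let u and t be positive integers and let M be an n×n zero-one matrix such that w(M) > t·u·n^{2 - 1/u}. Then the number of copies of K_{u,t} in M is at least (1/(u^{ut-t+u}·t^t)) · w(M)^{tu} / n^{2ut-u-t}. -/

import Mathlib

open Finset

/-- `M` contains `A`: strictly increasing row and column injections preserving 1-entries. -/
def Contains {r s m n : ℕ} (A : Fin r → Fin s → Bool) (M : Fin m → Fin n → Bool) : Prop :=
  ∃ (φ : Fin r → Fin m) (ψ : Fin s → Fin n),
    StrictMono φ ∧ StrictMono ψ ∧ ∀ i j, A i j = true → M (φ i) (ψ j) = true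

/-- The weight of a zero-one matrix: the number of its 1-entries. -/
def weight {m n : ℕ} (M : Fin m → Fin n → Bool) : ℕ :=
  (univ.filter fun p : Fin m × Fin n => M p.1 p.2 = true).card

/-- `matEx n A`: the maximum weight of an `n × n` zero-one matrix not containing `A`. -/
noncomputable def matEx {r s : ℕ} (n : ℕ) (A : Fin r → Fin s → Bool) : ℕ :=
  sSup {w : ℕ | ∃ M : Fin n → Fin n → Bool, ¬ Contains A M ∧ weight M = w}

/-- `A` is column-`t`-partite: the columns can be partitioned into `t` intervals so that
every row of each resulting submatrix has at most one 1-entry. -/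
def ColumnPartite {r s : ℕ} (t : ℕ) (A : Fin r → Fin s → Bool) : Prop :=
  ∃ f : Fin s → Fin t, Monotone f ∧
    ∀ (i : Fin r) (p : Fin t), (univ.filter fun j => f j = p ∧ A i j = true).card ≤ 1

/-- `A` is row-`t`-partite. -/
def RowPartite {r s : ℕ} (t : ℕ) (A : Fin r → Fin s → Bool) : Prop :=
  ∃ f : Fin r → Fin t, Monotone f ∧
    ∀ (j : Fin s) (p : Fin t), (univ.filter fun i => f i = p ∧ A i j = true).card ≤ 1

/-- The number of copies of `K_{u,t}` in `M`: pairs of a `u`-set of rows and a `t`-set of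
columns all of whose intersections are 1-entries. -/
def numCopies {m n : ℕ} (u t : ℕ) (M : Fin m → Fin n → Bool) : ℕ :=
  (((univ : Finset (Fin m)).powersetCard u ×ˢ (univ : Finset (Fin n)).powersetCard t).filter
    fun p => ∀ i ∈ p.1, ∀ j ∈ p.2, M i j = true).card

theorem block_index_lt {m k : ℕ} (hk : k ∣ m) (p : Fin k) (i : Fin (m / k)) :
    (p : ℕ) * (m / k) + (i : ℕ) < m :=
  calc (p : ℕ) * (m / k) + (i : ℕ) < ((p : ℕ) + 1) * (m / k) := by
        rw [add_mul, one_mul]; exact Nat.add_lt_add_left i.2 _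
    _ ≤ k * (m / k) := Nat.mul_le_mul_right _ p.2
    _ = m := Nat.mul_div_cancel' hk

/-- The `p`-th horizontal block of `M` (blocks of consecutive rows of height `m / k`). -/
def horizontalBlock {m n : ℕ} (k : ℕ) (hk : k ∣ m) (p : Fin k) (M : Fin m → Fin n → Bool) :
    Fin (m / k) → Fin n → Bool :=
  fun i j => M ⟨(p : ℕ) * (m / k) + (i : ℕ), block_index_lt hk p i⟩ j

/-- The `(p,q)` block of an `n × n` matrix: intersection of the `p`-th horizontal block and
the `q`-th vertical block. -/
def matBlock {n : ℕ} (k : ℕ) (hk : k ∣ n) (p q : Fin k) (M : Fin n → Fin n → Bool) :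
    Fin (n / k) → Fin (n / k) → Bool :=
  fun i j => M ⟨(p : ℕ) * (n / k) + (i : ℕ), block_index_lt hk p i⟩
               ⟨(q : ℕ) * (n / k) + (j : ℕ), block_index_lt hk q j⟩

/-- An `n × m` matrix is `r`-balanced: `r ∣ n` and in every column, the `r` consecutive
row-intervals of length `n / r` contain equally many 1-entries. -/
def RBalanced {n m : ℕ} (r : ℕ) (M : Fin n → Fin m → Bool) : Prop :=
  r ∣ n ∧ ∀ (c : Fin m) (i₁ i₂ : Fin r),
    (univ.filter fun a : Fin n =>
      (i₁ : ℕ) * (n / r) ≤ (a : ℕ) ∧ (a : ℕ) < ((i₁ : ℕ) + 1) * (n / r) ∧ M a c = true).card =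
    (univ.filter fun a : Fin n =>
      (i₂ : ℕ) * (n / r) ≤ (a : ℕ) ∧ (a : ℕ) < ((i₂ : ℕ) + 1) * (n / r) ∧ M a c = true).card

/-- The bipartite graph of a zero-one matrix: rows and columns are vertices, 1-entries edges. -/
def cycleGraph {r s : ℕ} (A : Fin r → Fin s → Bool) : SimpleGraph (Fin r ⊕ Fin s) where
  Adj x y :=
    (∃ i j, x = Sum.inl i ∧ y = Sum.inr j ∧ A i j = true) ∨
    (∃ i j, x = Sum.inr j ∧ y = Sum.inl i ∧ A i j = true)
  symm := by
    constructor
    intro x y h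
    rcases h with ⟨i, j, hx, hy, hA⟩ | ⟨i, j, hx, hy, hA⟩
    · exact Or.inr ⟨i, j, hy, hx, hA⟩
    · exact Or.inl ⟨i, j, hy, hx, hA⟩
  loopless := by
    constructor
    intro x h
    rcases h with ⟨i, j, hx, hy, _⟩ | ⟨i, j, hx, hy, _⟩ <;> subst hx <;> simp_all

/-- `A` is a cycle: every row and column has 0 or 2 one-entries, and the edges of the
associated bipartite graph form a single connected cycle (the graph induced on the
support of `cycleGraph A` is connected). -/
def IsCycleMatrix {r s : ℕ} (A : Fin r → Fin s → Bool) : Prop :=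
  (∀ i : Fin r, (univ.filter fun j => A i j = true).card = 0 ∨
      (univ.filter fun j => A i j = true).card = 2) ∧
  (∀ j : Fin s, (univ.filter fun i => A i j = true).card = 0 ∨
      (univ.filter fun i => A i j = true).card = 2) ∧
  ((cycleGraph A).induce (cycleGraph A).support).Connected

/-- A cycle is x-monotone: every vertical line crosses at most two rows, i.e. for every `j`,
at most two rows have 1-entries in columns `c₁ ≤ j < c₂`. -/
def XMonotone {r s : ℕ} (A : Fin r → Fin s → Bool) : Prop :=
  ∀ j : ℕ, (univ.filter fun i : Fin r =>
    ∃ c₁ c₂ : Fin s, A i c₁ = true ∧ A i c₂ = true ∧ (c₁ : ℕ) ≤ j ∧ j < (c₂ : ℕ)).card ≤ 2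

noncomputable def hconv (k : ℕ) : ℝ → ℝ :=
  fun x => (∏ i ∈ Finset.range k, (max x ((k : ℝ) - 1) - (i : ℝ))) / (k.factorial : ℝ)

lemma prod_fact_aux (c : ℝ) (m : ℕ) (hm : ∀ i, i < m → (i : ℝ) ≤ c) :
    ConvexOn ℝ Set.univ (fun x => ∏ i ∈ Finset.range m, (max x c - (i : ℝ))) ∧
    Monotone (fun x => ∏ i ∈ Finset.range m, (max x c - (i : ℝ))) ∧
    (∀ x : ℝ, 0 ≤ ∏ i ∈ Finset.range m, (max x c - (i : ℝ))) := by
  induction m with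
  | zero => simp [convexOn_const, monotone_const, convex_univ]
  | succ m ih =>
    obtain ⟨hc, hmono, hpos⟩ := ih (fun i hi => hm i (hi.trans (Nat.lt_succ_self m)))
    have hfac_mono : Monotone (fun x : ℝ => max x c - (m : ℝ)) :=
      fun a b hab => by simp only [sub_le_sub_iff_right]; exact max_le_max hab le_rfl
    have hfac_nonneg : ∀ x : ℝ, 0 ≤ max x c - (m : ℝ) := fun x =>
      sub_nonneg.2 ((hm m (Nat.lt_succ_self m)).trans (le_max_right x c))
    have hfac_conv : ConvexOn ℝ Set.univ (fun x : ℝ => max x c - (m : ℝ)) := by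
      have : ConvexOn ℝ Set.univ (fun x : ℝ => max x c) :=
        (convexOn_id convex_univ).sup (convexOn_const c convex_univ)
      have hfun : (fun x : ℝ => max x c - (m : ℝ)) = (fun x => max x c) + (fun _ => -(m : ℝ)) := by
        funext x; simp [sub_eq_add_neg]
      rw [hfun]; exact this.add (convexOn_const (-(m : ℝ)) convex_univ)
    have key : ConvexOn ℝ Set.univ
        ((fun x => ∏ i ∈ Finset.range m, (max x c - (i : ℝ))) * (fun x : ℝ => max x c - (m : ℝ))) := by
      apply hc.mul hfac_conv (fun x _ => hpos x) (fun x _ => hfac_nonneg x)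
      intro x _ y _ hlt
      exact hmono (by by_contra h; exact absurd (hfac_mono (le_of_not_ge h)) (not_le.2 hlt))
    refine ⟨?_, ?_, ?_⟩
    · simpa [Finset.prod_range_succ, Pi.mul_def] using key
    · intro a b hab
      simp only [Finset.prod_range_succ]
      exact mul_le_mul (hmono hab) (hfac_mono hab) (hfac_nonneg a) (hpos b)
    · intro x
      rw [Finset.prod_range_succ]
      exact mul_nonneg (hpos x) (hfac_nonneg x)

lemma hconv_convexOn (k : ℕ) : ConvexOn ℝ Set.univ (hconv k) := by
  have h := (prod_fact_aux ((k : ℝ) - 1) k (fun i hi => by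
    have : (i : ℝ) + 1 ≤ (k : ℝ) := by exact_mod_cast Nat.succ_le_of_lt hi
    linarith)).1
  have h2 := h.smul (c := ((k.factorial : ℝ))⁻¹) (by positivity)
  unfold hconv
  simpa [div_eq_inv_mul, smul_eq_mul] using h2

lemma hconv_nat (k d : ℕ) : hconv k (d : ℕ) = ((d.choose k : ℕ) : ℝ) := by
  unfold hconv
  rcases le_or_gt k (d + 1) with h | h
  · -- d ≥ k - 1 : max = d
    have hmax : max (d : ℝ) ((k : ℝ) - 1) = (d : ℝ) := by
      rw [max_eq_left]
      have : (k : ℝ) ≤ (d : ℝ) + 1 := by exact_mod_cast h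
      linarith
    rw [hmax]
    have hprod : ∏ i ∈ Finset.range k, ((d : ℝ) - (i : ℝ)) = ((d.descFactorial k : ℕ) : ℝ) := by
      rw [Nat.descFactorial_eq_prod_range, Nat.cast_prod]
      refine Finset.prod_congr rfl (fun i hi => ?_)
      rw [Finset.mem_range] at hi
      have hid : i ≤ d := by omega
      rw [Nat.cast_sub hid]
    rw [hprod, Nat.descFactorial_eq_factorial_mul_choose, Nat.cast_mul]
    rw [mul_comm, mul_div_assoc, div_self (by positivity), mul_one]
  · -- d + 1 < k, i.e. d < k - 1 : max = k - 1, and product has zero factor at i = k-1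
    have hmax : max (d : ℝ) ((k : ℝ) - 1) = (k : ℝ) - 1 := by
      rw [max_eq_right]
      have : (d : ℝ) + 1 ≤ (k : ℝ) := by exact_mod_cast h.le
      linarith
    rw [hmax, Nat.choose_eq_zero_of_lt (by omega), Nat.cast_zero]
    rw [Finset.prod_eq_zero (i := k - 1) (Finset.mem_range.2 (by omega))]
    · simp
    · have : ((k - 1 : ℕ) : ℝ) = (k : ℝ) - 1 := by
        rw [Nat.cast_sub (by omega)]; norm_num
      rw [this]; ring

lemma hconv_lower {k : ℕ} (hk : 1 ≤ k) {x : ℝ} (hx : (k : ℝ) ≤ x) :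
    (x / k) ^ k ≤ hconv k x := by
  have hk0 : (0 : ℝ) < k := by exact_mod_cast hk
  have hmax : max x ((k : ℝ) - 1) = x := max_eq_left (by linarith)
  unfold hconv
  rw [hmax]
  have hfact : ((k.factorial : ℕ) : ℝ) = ∏ i ∈ Finset.range k, ((k : ℝ) - (i : ℝ)) := by
    have := (Nat.descFactorial_self k).symm
    rw [Nat.descFactorial_eq_prod_range] at this
    rw [this, Nat.cast_prod]
    exact Finset.prod_congr rfl (fun i hi => by
      rw [Finset.mem_range] at hi; rw [Nat.cast_sub hi.le])
  rw [hfact, ← Finset.prod_div_distrib]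
  have : (x / k) ^ k = ∏ _i ∈ Finset.range k, (x / k) := by
    rw [Finset.prod_const, Finset.card_range]
  rw [this]
  refine Finset.prod_le_prod (fun i _ => div_nonneg (by linarith) hk0.le) (fun i hi => ?_)
  rw [Finset.mem_range] at hi
  have hik : (i : ℝ) < (k : ℝ) := by exact_mod_cast hi
  rw [div_le_div_iff₀ hk0 (by linarith)]
  nlinarith

lemma jensen_choose {α : Type*} (s : Finset α) (hs : s.Nonempty) (k : ℕ) (p : α → ℕ) :
    (s.card : ℝ) * hconv k ((∑ a ∈ s, (p a : ℝ)) / s.card) ≤ ∑ a ∈ s, ((p a).choose k : ℝ) := by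
  have hcard : (0:ℝ) < s.card := by exact_mod_cast hs.card_pos
  have hj := (hconv_convexOn k).map_sum_le (t := s) (w := fun _ => (s.card : ℝ)⁻¹)
      (p := fun a => (p a : ℝ)) (fun _ _ => by positivity)
      (by rw [Finset.sum_const, nsmul_eq_mul]; field_simp) (fun _ _ => Set.mem_univ _)
  simp only [smul_eq_mul] at hj
  have h1 : ∑ a ∈ s, ((s.card : ℝ))⁻¹ * (p a : ℝ) = (∑ a ∈ s, (p a : ℝ)) / s.card := by
    rw [← Finset.mul_sum]; ring
  have h2 : ∑ a ∈ s, ((s.card : ℝ))⁻¹ * hconv k ((p a : ℝ)) =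
      (∑ a ∈ s, ((p a).choose k : ℝ)) / s.card := by
    rw [← Finset.mul_sum]
    rw [Finset.sum_congr rfl (fun a _ => hconv_nat k (p a))]
    ring
  rw [h1, h2] at hj
  calc (s.card : ℝ) * hconv k ((∑ a ∈ s, (p a : ℝ)) / s.card)
      ≤ (s.card : ℝ) * ((∑ a ∈ s, ((p a).choose k : ℝ)) / s.card) := by
        exact mul_le_mul_of_nonneg_left hj hcard.le
    _ = ∑ a ∈ s, ((p a).choose k : ℝ) := by field_simp


section counting
variable {m n : ℕ} (M : Fin m → Fin n → Bool)

def colSet (S : Finset (Fin m)) : Finset (Fin n) := univ.filter fun j => ∀ i ∈ S, M i j = true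

def rowSet (j : Fin n) : Finset (Fin m) := univ.filter fun i => M i j = true

lemma weight_eq_sum : weight M = ∑ j : Fin n, (rowSet M j).card := by
  unfold weight rowSet
  rw [Finset.card_filter, ← Finset.univ_product_univ, Finset.sum_product]
  rw [Finset.sum_comm]
  exact Finset.sum_congr rfl (fun j _ => by rw [Finset.card_filter])

lemma copies_eq (u t : ℕ) :
    numCopies u t M = ∑ S ∈ (univ : Finset (Fin m)).powersetCard u, ((colSet M S).card.choose t) := by
  unfold numCopies
  rw [Finset.card_filter, Finset.sum_product]
  refine Finset.sum_congr rfl (fun S _ => ?_)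
  rw [← Finset.card_filter]
  have : ((univ : Finset (Fin n)).powersetCard t).filter
      (fun T => ∀ i ∈ S, ∀ j ∈ T, M i j = true) = (colSet M S).powersetCard t := by
    ext T
    simp only [Finset.mem_filter, Finset.mem_powersetCard, colSet, Finset.subset_iff,
      Finset.mem_filter, Finset.mem_univ, true_and]
    constructor
    · rintro ⟨⟨-, hc⟩, hP⟩
      exact ⟨fun {j} hj => fun i hi => hP i hi j hj, hc⟩
    · rintro ⟨hsub, hc⟩
      exact ⟨⟨fun {j} _ => trivial, hc⟩, fun i hi j hj => hsub hj i hi⟩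
  rw [this, Finset.card_powersetCard]

lemma double_count (u : ℕ) :
    ∑ S ∈ (univ : Finset (Fin m)).powersetCard u, (colSet M S).card
      = ∑ j : Fin n, ((rowSet M j).card.choose u) := by
  have h1 : ∀ S : Finset (Fin m), (colSet M S).card
      = ∑ j : Fin n, if (∀ i ∈ S, M i j = true) then 1 else 0 := by
    intro S; rw [← Finset.card_filter]; rfl
  rw [Finset.sum_congr rfl (fun S _ => h1 S), Finset.sum_comm]
  refine Finset.sum_congr rfl (fun j _ => ?_)
  rw [← Finset.card_filter]
  have : ((univ : Finset (Fin m)).powersetCard u).filter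
      (fun S => ∀ i ∈ S, M i j = true) = (rowSet M j).powersetCard u := by
    ext S
    simp only [Finset.mem_filter, Finset.mem_powersetCard, rowSet, Finset.subset_iff,
      Finset.mem_filter, Finset.mem_univ, true_and]
    tauto
  rw [this, Finset.card_powersetCard]

end counting

lemma nat_exp_lemma {u t : ℕ} (hu : 0 < u) (ht : 0 < t) :
    u ^ (u * t) ≤ u.factorial ^ (t - 1) * u ^ (u * t - t + u) := by
  rcases le_or_gt t u with h | h
  · have he : u * t ≤ u * t - t + u := by
      have h1 : t ≤ u * t := Nat.le_mul_of_pos_left t hu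
      omega
    calc u ^ (u * t) ≤ u ^ (u * t - t + u) := Nat.pow_le_pow_right hu he
      _ ≤ _ := Nat.le_mul_of_pos_left _ (Nat.pow_pos (Nat.factorial_pos u))
  · have hfac : u ≤ u.factorial := Nat.self_le_factorial u
    have h1 : u ^ (t - 1) ≤ u.factorial ^ (t - 1) := Nat.pow_le_pow_left hfac _
    have h2 : u ^ (t - u) ≤ u ^ (t - 1) := Nat.pow_le_pow_right hu (by omega)
    have he : (t - u) + (u * t - t + u) = u * t := by
      have h1 : t ≤ u * t := Nat.le_mul_of_pos_left t hu
      have h2 : u ≤ u * t := Nat.le_mul_of_pos_right u ht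
      omega
    calc u ^ (u * t) = u ^ (t - u) * u ^ (u * t - t + u) := by rw [← pow_add, he]
      _ ≤ u ^ (t - 1) * u ^ (u * t - t + u) := Nat.mul_le_mul_right _ h2
      _ ≤ _ := Nat.mul_le_mul_right _ h1

theorem stmt3 {u t n : ℕ} (hu : 0 < u) (ht : 0 < t) (M : Fin n → Fin n → Bool)
    (hw : (t : ℝ) * (u : ℝ) * (n : ℝ) ^ ((2 : ℝ) - 1 / (u : ℝ)) < (weight M : ℝ)) :
    1 / ((u : ℝ) ^ (u * t - t + u) * (t : ℝ) ^ t) * (weight M : ℝ) ^ (t * u) /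
        (n : ℝ) ^ (2 * u * t - u - t) ≤ (numCopies u t M : ℝ) := by
  have hu1 : (1:ℝ) ≤ u := by exact_mod_cast hu
  have ht1 : (1:ℝ) ≤ t := by exact_mod_cast ht
  have hu0 : (0:ℝ) < u := by linarith
  have ht0 : (0:ℝ) < t := by linarith
  -- n is positive
  have hn : 0 < n := by
    rcases Nat.eq_zero_or_pos n with h | h
    · exfalso
      subst h
      have hW : weight M = 0 := by
        unfold weight
        simp [Finset.filter_eq_empty_iff]
      rw [hW] at hw
      have : (0:ℝ) ≤ (t : ℝ) * (u : ℝ) * (0 : ℝ) ^ ((2 : ℝ) - 1 / (u : ℝ)) := by positivity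
      simp only [Nat.cast_zero] at hw
      linarith
    · exact h
  have hn0 : (0:ℝ) < n := by exact_mod_cast hn
  have hn1 : (1:ℝ) ≤ n := by exact_mod_cast hn
  set W : ℕ := weight M with hWdef
  have hW0 : (0:ℝ) < W := lt_of_le_of_lt (by positivity) hw
  -- C1 : t*u*n < W
  have hnpow : (n:ℝ) ≤ (n:ℝ) ^ ((2:ℝ) - 1 / u) := by
    nth_rewrite 1 [← Real.rpow_one (n:ℝ)]
    apply Real.rpow_le_rpow_of_exponent_le hn1
    have : 1 / (u:ℝ) ≤ 1 := by rw [div_le_one hu0]; exact hu1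
    linarith
  have hC1 : (t:ℝ) * u * n < W :=
    lt_of_le_of_lt (by gcongr) hw
  -- C2 : t^u * u^u * n^(2u-1) < W^u
  have hrpow_eq : ((n:ℝ) ^ ((2:ℝ) - 1 / u)) ^ u = (n:ℝ) ^ (2 * u - 1 : ℕ) := by
    rw [← Real.rpow_natCast ((n:ℝ) ^ ((2:ℝ) - 1 / u)) u, ← Real.rpow_mul hn0.le,
      ← Real.rpow_natCast (n:ℝ) (2 * u - 1)]
    congr 1
    have hcast : ((2 * u - 1 : ℕ) : ℝ) = 2 * (u:ℝ) - 1 := by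
      have : 1 ≤ 2 * u := by omega
      push_cast [this]
      ring
    rw [hcast]
    field_simp
  have hC2 : (t:ℝ)^u * (u:ℝ)^u * (n:ℝ)^(2*u-1) < (W:ℝ)^u := by
    have := pow_lt_pow_left₀ hw (by positivity) hu.ne'
    calc (t:ℝ)^u * (u:ℝ)^u * (n:ℝ)^(2*u-1)
        = ((t:ℝ) * u * (n:ℝ) ^ ((2:ℝ) - 1 / u))^u := by rw [mul_pow, mul_pow, hrpow_eq]
      _ < (W:ℝ)^u := this
  -- Stage 1
  set d : Fin n → ℕ := fun j => (rowSet M j).card with hd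
  set X : ℕ := ∑ j : Fin n, (d j).choose u with hX
  have hsumd : ∑ j : Fin n, ((d j : ℝ)) = (W:ℝ) := by
    rw [hWdef, weight_eq_sum]
    push_cast
    rfl
  have hXcast : ∑ j : Fin n, (((d j).choose u : ℕ) : ℝ) = (X:ℝ) := by
    rw [hX]; push_cast; rfl
  have hjensen1 : (n:ℝ) * hconv u ((W:ℝ)/n) ≤ (X:ℝ) := by
    have := jensen_choose (univ : Finset (Fin n)) (by simpa using Finset.univ_nonempty_iff.2 ⟨⟨0, hn⟩⟩) u d
    rw [Finset.card_univ, Fintype.card_fin, hsumd, hXcast] at this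
    exact this
  have havg1 : (u:ℝ) ≤ (W:ℝ)/n := by
    rw [le_div_iff₀ hn0]
    nlinarith
  have hlow1 : (((W:ℝ)/n)/u)^u ≤ hconv u ((W:ℝ)/n) := hconv_lower hu havg1
  have hnu_split : (n:ℝ)^u = (n:ℝ)^(u-1) * n := by
    rw [← pow_succ]
    congr 1
    omega
  have hX1 : (W:ℝ)^u ≤ (X:ℝ) * ((u:ℝ)^u * (n:ℝ)^(u-1)) := by
    have h1 : (n:ℝ) * (((W:ℝ)/n)/u)^u ≤ (X:ℝ) :=
      le_trans (by gcongr) hjensen1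
    have h2 : (n:ℝ) * (((W:ℝ)/n)/u)^u * ((u:ℝ)^u * (n:ℝ)^(u-1)) = (W:ℝ)^u := by
      rw [div_div, div_pow, mul_pow]
      field_simp
      rw [hnu_split]
      ring
    calc (W:ℝ)^u = (n:ℝ) * (((W:ℝ)/n)/u)^u * ((u:ℝ)^u * (n:ℝ)^(u-1)) := h2.symm
      _ ≤ (X:ℝ) * ((u:ℝ)^u * (n:ℝ)^(u-1)) := by gcongr <;> positivity
  -- Stage 2 setup
  have hWn2 : (W:ℝ) ≤ (n:ℝ) * n := by
    have : W ≤ n * n := by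
      rw [hWdef]
      unfold weight
      calc (Finset.filter _ Finset.univ).card ≤ (Finset.univ : Finset (Fin n × Fin n)).card :=
            Finset.card_filter_le _ _
        _ = n * n := by simp
    exact_mod_cast this
  have hun : u ≤ n := by
    have h2u : (n:ℝ)^(2*u-1) * n = (n:ℝ)^(2*u) := by
      rw [← pow_succ]; congr 1; omega
    have hWu : (W:ℝ)^u ≤ (n:ℝ)^(2*u) := by
      calc (W:ℝ)^u ≤ ((n:ℝ) * n)^u := by gcongr
        _ = (n:ℝ)^(2*u) := by rw [show ((n:ℝ)*n) = (n:ℝ)^2 by ring, ← pow_mul]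
    have hlt : (t:ℝ)^u * (u:ℝ)^u < (n:ℝ) := by
      have hpos : (0:ℝ) < (n:ℝ)^(2*u-1) := by positivity
      have := lt_of_lt_of_le hC2 hWu
      rw [← h2u] at this
      calc (t:ℝ)^u * (u:ℝ)^u = ((t:ℝ)^u * (u:ℝ)^u * (n:ℝ)^(2*u-1)) / (n:ℝ)^(2*u-1) := by
            field_simp
        _ < ((n:ℝ)^(2*u-1) * n) / (n:ℝ)^(2*u-1) := by gcongr
        _ = n := by field_simp
    have : (u:ℝ) < n := by
      calc (u:ℝ) ≤ (u:ℝ)^u := by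
            exact_mod_cast Nat.le_self_pow hu.ne' u
        _ ≤ (t:ℝ)^u * (u:ℝ)^u := by
            nlinarith [one_le_pow₀ ht1 (n := u), pow_pos hu0 u]
        _ < n := hlt
    exact_mod_cast this.le
  set N : ℕ := n.choose u with hN
  have hN1 : 0 < N := Nat.choose_pos hun
  have hN0 : (0:ℝ) < N := by exact_mod_cast hN1
  have hNfac : (N:ℝ) * (u.factorial : ℝ) ≤ (n:ℝ)^u := by
    have : u.factorial * N ≤ n^u := by
      rw [hN, ← Nat.descFactorial_eq_factorial_mul_choose]
      exact Nat.descFactorial_le_pow n u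
    calc (N:ℝ) * (u.factorial : ℝ) = ((u.factorial * N : ℕ) : ℝ) := by push_cast; ring
      _ ≤ ((n^u : ℕ) : ℝ) := by exact_mod_cast this
      _ = (n:ℝ)^u := by push_cast; rfl
  set s2 : Finset (Finset (Fin n)) := (univ : Finset (Fin n)).powersetCard u with hs2
  have hcard2 : s2.card = N := by
    rw [hs2, Finset.card_powersetCard, Finset.card_univ, Fintype.card_fin, hN]
  have hs2ne : s2.Nonempty := Finset.card_pos.mp (by rw [hcard2]; exact hN1)
  have hsum2 : ∑ S ∈ s2, (((colSet M S).card : ℕ) : ℝ) = (X:ℝ) := by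
    rw [← hXcast, ← Nat.cast_sum, ← Nat.cast_sum]
    congr 1
    exact double_count M u
  have hcopies_eq : ∑ S ∈ s2, (((colSet M S).card.choose t : ℕ) : ℝ) = (numCopies u t M : ℝ) := by
    rw [← Nat.cast_sum]
    congr 1
    exact (copies_eq M u t).symm
  have hjensen2 : (N:ℝ) * hconv t ((X:ℝ)/N) ≤ (numCopies u t M : ℝ) := by
    have := jensen_choose s2 hs2ne t (fun S => (colSet M S).card)
    rw [hcard2, hsum2, hcopies_eq] at this
    exact this
  -- average in stage 2 is at least t
  have hn2u1 : (n:ℝ)^u * (n:ℝ)^(u-1) = (n:ℝ)^(2*u-1) := by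
    rw [← pow_add]; congr 1; omega
  have hfacge1 : (1:ℝ) ≤ (u.factorial : ℝ) := by exact_mod_cast Nat.one_le_iff_ne_zero.2 (Nat.factorial_ne_zero u)
  have htN : (t:ℝ) * N < (X:ℝ) := by
    have hkey : (t:ℝ) * N * (u.factorial : ℝ) * ((u:ℝ)^u * (n:ℝ)^(u-1)) < (X:ℝ) * ((u:ℝ)^u * (n:ℝ)^(u-1)) := by
      calc (t:ℝ) * N * (u.factorial : ℝ) * ((u:ℝ)^u * (n:ℝ)^(u-1))
          ≤ (t:ℝ) * (n:ℝ)^u * ((u:ℝ)^u * (n:ℝ)^(u-1)) := by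
            rw [mul_assoc ((t:ℝ))]
            gcongr
        _ = (t:ℝ) * (u:ℝ)^u * (n:ℝ)^(2*u-1) := by rw [← hn2u1]; ring
        _ ≤ (t:ℝ)^u * (u:ℝ)^u * (n:ℝ)^(2*u-1) := by
            gcongr
            exact le_self_pow₀ ht1 hu.ne'
        _ < (W:ℝ)^u := hC2
        _ ≤ (X:ℝ) * ((u:ℝ)^u * (n:ℝ)^(u-1)) := hX1
    have hpos : (0:ℝ) < (u:ℝ)^u * (n:ℝ)^(u-1) := by positivity
    have h2 := lt_of_mul_lt_mul_right hkey hpos.le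
    calc (t:ℝ) * N = (t:ℝ) * N * 1 := by ring
      _ ≤ (t:ℝ) * N * (u.factorial : ℝ) := by gcongr
      _ < (X:ℝ) := h2
  have hX0 : (0:ℝ) < X := lt_of_le_of_lt (by positivity) htN
  have havg2 : (t:ℝ) ≤ (X:ℝ)/N := by
    rw [le_div_iff₀ hN0]
    calc (t:ℝ) * N ≤ (X:ℝ) := htN.le
      _ = _ := rfl
  have hlow2 : (((X:ℝ)/N)/t)^t ≤ hconv t ((X:ℝ)/N) := hconv_lower ht havg2
  have hNsplit : (N:ℝ)^t = (N:ℝ)^(t-1) * N := by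
    rw [← pow_succ]; congr 1; omega
  have hfinal2 : (X:ℝ)^t ≤ (numCopies u t M : ℝ) * ((t:ℝ)^t * (N:ℝ)^(t-1)) := by
    have h1 : (N:ℝ) * (((X:ℝ)/N)/t)^t ≤ (numCopies u t M : ℝ) :=
      le_trans (by gcongr) hjensen2
    have h2 : (N:ℝ) * (((X:ℝ)/N)/t)^t * ((t:ℝ)^t * (N:ℝ)^(t-1)) = (X:ℝ)^t := by
      rw [div_div, div_pow, mul_pow]
      field_simp
      rw [hNsplit]
      ring
    calc (X:ℝ)^t = (N:ℝ) * (((X:ℝ)/N)/t)^t * ((t:ℝ)^t * (N:ℝ)^(t-1)) := h2.symm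
      _ ≤ (numCopies u t M : ℝ) * ((t:ℝ)^t * (N:ℝ)^(t-1)) := by gcongr
  -- assemble
  have hXt : (W:ℝ)^(u*t) ≤ (X:ℝ)^t * ((u:ℝ)^(u*t) * (n:ℝ)^((u-1)*t)) := by
    calc (W:ℝ)^(u*t) = ((W:ℝ)^u)^t := by rw [← pow_mul]
      _ ≤ ((X:ℝ) * ((u:ℝ)^u * (n:ℝ)^(u-1)))^t := by
          apply pow_le_pow_left₀ (by positivity) hX1
      _ = (X:ℝ)^t * ((u:ℝ)^(u*t) * (n:ℝ)^((u-1)*t)) := by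
          rw [mul_pow, mul_pow, ← pow_mul, ← pow_mul]
  have hNt : (N:ℝ)^(t-1) * (u:ℝ)^(u*t) ≤ (u:ℝ)^(u*t-t+u) * (n:ℝ)^(u*(t-1)) := by
    have h1 : ((N:ℝ) * (u.factorial : ℝ))^(t-1) ≤ ((n:ℝ)^u)^(t-1) :=
      pow_le_pow_left₀ (by positivity) hNfac _
    have h2 : (u:ℝ)^(u*t) ≤ (u.factorial : ℝ)^(t-1) * (u:ℝ)^(u*t-t+u) := by
      exact_mod_cast nat_exp_lemma hu ht
    calc (N:ℝ)^(t-1) * (u:ℝ)^(u*t)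
        ≤ (N:ℝ)^(t-1) * ((u.factorial : ℝ)^(t-1) * (u:ℝ)^(u*t-t+u)) := by gcongr
      _ = ((N:ℝ) * (u.factorial : ℝ))^(t-1) * (u:ℝ)^(u*t-t+u) := by rw [mul_pow]; ring
      _ ≤ ((n:ℝ)^u)^(t-1) * (u:ℝ)^(u*t-t+u) := by gcongr
      _ = (u:ℝ)^(u*t-t+u) * (n:ℝ)^(u*(t-1)) := by rw [← pow_mul]; ring
  have hexp_eq : (u-1)*t + u*(t-1) = 2*u*t - u - t := by
    obtain ⟨a, rfl⟩ : ∃ a, u = a + 1 := ⟨u - 1, by omega⟩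
    obtain ⟨b, rfl⟩ : ∃ b, t = b + 1 := ⟨t - 1, by omega⟩
    simp only [Nat.add_sub_cancel]
    have h : 2*(a+1)*(b+1) = (a*(b+1) + (a+1)*b + (b+1)) + (a+1) := by ring
    rw [h, Nat.add_sub_cancel, Nat.add_sub_cancel]
  have hnexp : (n:ℝ)^((u-1)*t) * (n:ℝ)^(u*(t-1)) = (n:ℝ)^(2*u*t-u-t) := by
    rw [← pow_add, hexp_eq]
  have hfinal : (W:ℝ)^(u*t) ≤ (numCopies u t M : ℝ) * ((t:ℝ)^t * ((u:ℝ)^(u*t-t+u) * (n:ℝ)^(2*u*t-u-t))) := by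
    calc (W:ℝ)^(u*t) ≤ (X:ℝ)^t * ((u:ℝ)^(u*t) * (n:ℝ)^((u-1)*t)) := hXt
      _ ≤ ((numCopies u t M : ℝ) * ((t:ℝ)^t * (N:ℝ)^(t-1))) * ((u:ℝ)^(u*t) * (n:ℝ)^((u-1)*t)) := by
          gcongr
      _ = (numCopies u t M : ℝ) * (t:ℝ)^t * ((N:ℝ)^(t-1) * (u:ℝ)^(u*t)) * (n:ℝ)^((u-1)*t) := by ring
      _ ≤ (numCopies u t M : ℝ) * (t:ℝ)^t * ((u:ℝ)^(u*t-t+u) * (n:ℝ)^(u*(t-1))) * (n:ℝ)^((u-1)*t) := by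
          gcongr
      _ = (numCopies u t M : ℝ) * ((t:ℝ)^t * ((u:ℝ)^(u*t-t+u) * ((n:ℝ)^((u-1)*t) * (n:ℝ)^(u*(t-1))))) := by ring
      _ = _ := by rw [hnexp]
  have hApos : (0:ℝ) < (u:ℝ)^(u*t-t+u) * (t:ℝ)^t := by positivity
  rw [div_le_iff₀ (by positivity : (0:ℝ) < (n:ℝ)^(2*u*t-u-t)), one_div, inv_mul_le_iff₀ hApos]
  calc (W:ℝ)^(t*u) = (W:ℝ)^(u*t) := by rw [Nat.mul_comm]
    _ ≤ (numCopies u t M : ℝ) * ((t:ℝ)^t * ((u:ℝ)^(u*t-t+u) * (n:ℝ)^(2*u*t-u-t))) := hfinal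
    _ = (u:ℝ)^(u*t-t+u) * (t:ℝ)^t * ((numCopies u t M : ℝ) * (n:ℝ)^(2*u*t-u-t)) := by ring
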